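/- Let A = D^A_0 + L^A_{10}(L^A_{20})ᵀ, G₀ = D^G_0, H₀ = D^H_0 (banded, with I + D^G_0 D^H_0 invertible). Then the first SDA iterate G₁ = G₀ + A(I+G₀H₀)⁻¹G₀Aᵀ equals D^G_1 + L^G_1 K^G_1 (L^G_1)ᵀ where D^G_1 = D^G_0 + D^{AGHG}_0 (D^A_0)ᵀ, L^G_1 = [L^A_{10}, D^{AGHG}_0 L^A_{20}], and K^G_1 = [[(L^A_{20})ᵀ D^{GHG}_0 L^A_{20}, I],[I, 0]], with D^{AGHG}_0 = D^A_0(I+D^G_0D^H_0)⁻¹D^G_0 and D^{GHG}_0 = (I+D^G_0D^H_0)⁻¹D^G_0. -/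

import Mathlib

open Matrix

/-- The `k = 1` FSDA factored form of `G₁`. -/
theorem fsda_G1 {N m : ℕ} (DA DG DH : Matrix (Fin N) (Fin N) ℝ)
    (L10 L20 : Matrix (Fin N) (Fin m) ℝ)
    (hDG : DG.IsSymm) (hDH : DH.IsSymm)
    (hinv : IsUnit (1 + DG * DH).det) :
    DG + (DA + L10 * L20ᵀ) * (1 + DG * DH)⁻¹ * DG * (DA + L10 * L20ᵀ)ᵀ =
      (DG + (DA * (1 + DG * DH)⁻¹ * DG) * DAᵀ) +
        Matrix.fromCols L10 ((DA * (1 + DG * DH)⁻¹ * DG) * L20) *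
          fromBlocks (L20ᵀ * ((1 + DG * DH)⁻¹ * DG) * L20) 1 1 (0 : Matrix (Fin m) (Fin m) ℝ) *
          (Matrix.fromCols L10 ((DA * (1 + DG * DH)⁻¹ * DG) * L20))ᵀ := by
  set B := 1 + DG * DH with hB
  have hBt : Bᵀ = 1 + DH * DG := by
    simp [hB, transpose_mul, hDG.eq, hDH.eq]
  have hinvT : IsUnit Bᵀ.det := by rwa [Matrix.det_transpose]
  have hcomm : DG * Bᵀ = B * DG := by
    rw [hBt, hB]; noncomm_ring
  have key : B⁻¹ * DG = DG * (Bᵀ)⁻¹ := by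
    have h1 : B⁻¹ * (DG * Bᵀ) * (Bᵀ)⁻¹ = B⁻¹ * DG := by
      rw [mul_assoc, mul_assoc, Matrix.mul_nonsing_inv _ hinvT, mul_one]
    have h2 : B⁻¹ * (B * DG) * (Bᵀ)⁻¹ = DG * (Bᵀ)⁻¹ := by
      simp only [← mul_assoc]
      rw [Matrix.nonsing_inv_mul _ hinv, one_mul]
    rw [← h1, hcomm, h2]
  rw [transpose_fromCols, fromCols_mul_fromBlocks, fromCols_mul_fromRows]
  simp only [transpose_add, transpose_mul, transpose_transpose, transpose_one,
    Matrix.mul_one, Matrix.one_mul, Matrix.mul_zero, Matrix.zero_mul, add_zero, zero_add,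
    hDG.eq]
  rw [show (Bᵀ)⁻¹ = B⁻¹ᵀ from (transpose_nonsing_inv B).symm] at key
  simp only [key, Matrix.mul_assoc, Matrix.mul_add, Matrix.add_mul]
  abel
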